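/- Let F : H → H be monotone (in fact continuous, Lipschitz), g proper, convex, lsc, γ ∈ (0, 1/L), and suppose zer(F + ∂g) ≠ ∅. Then the extragradient sequence (zᵏ) converges weakly to a point in zer(F + ∂g). -/

import Mathlib

open scoped RealInnerProductSpace
open Filter

/-- `g` is proper: finite somewhere and never `⊥`. -/
def IsProperEF {H : Type*} (g : H → EReal) : Prop :=
  (∃ x, g x ≠ ⊤) ∧ ∀ x, g x ≠ ⊥

/-- `g` is convex (extended-real-valued). -/
def IsConvexEF {H : Type*} [NormedAddCommGroup H] [InnerProductSpace ℝ H]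
    (g : H → EReal) : Prop :=
  ∀ x y : H, ∀ a b : ℝ, 0 ≤ a → 0 ≤ b → a + b = 1 →
    g (a • x + b • y) ≤ (a : EReal) * g x + (b : EReal) * g y

/-- `ξ` is a subgradient of `g` at `z`, i.e. `ξ ∈ ∂g(z)`. -/
def InSubdiff {H : Type*} [NormedAddCommGroup H] [InnerProductSpace ℝ H]
    (g : H → EReal) (z ξ : H) : Prop :=
  ∀ y : H, g z + ((⟪ξ, y - z⟫ : ℝ) : EReal) ≤ g y

/-- `p = prox_{γ g}(x)`, i.e. `p` minimizes `g(·) + (1/(2γ))‖x - ·‖²`. -/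
def IsProx {H : Type*} [NormedAddCommGroup H] [InnerProductSpace ℝ H]
    (g : H → EReal) (γ : ℝ) (x p : H) : Prop :=
  ∀ y : H, g p + ((1 / (2 * γ) * ‖x - p‖ ^ 2 : ℝ) : EReal) ≤
    g y + ((1 / (2 * γ) * ‖x - y‖ ^ 2 : ℝ) : EReal)

/-- The Lyapunov function `V`. -/
noncomputable def lyapV {H : Type*} [NormedAddCommGroup H] [InnerProductSpace ℝ H]
    (F : H → H) (γ : ℝ) (z zb zp : H) : ℝ :=
  (2 / γ) * ⟪z - zp, F z - F zb⟫ + (1 / γ ^ 2) * ‖zp - zb‖ ^ 2 + (1 / γ ^ 2) * ‖z - zp‖ ^ 2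

section Aux
variable {H : Type*} [NormedAddCommGroup H] [InnerProductSpace ℝ H]

lemma gne_top_of_inSubdiff {g : H → EReal} {p ξ : H} (h : InSubdiff g p ξ)
    {y₀ : H} (hy₀ : g y₀ ≠ ⊤) : g p ≠ ⊤ := by
  intro hp
  have h1 := h y₀
  rw [hp, EReal.top_add_coe] at h1
  exact hy₀ (top_le_iff.mp h1)

lemma insubdiff_real {g : H → EReal} {p ξ y : H} (h : InSubdiff g p ξ)
    {gp gy : ℝ} (hp : g p = (gp : EReal)) (hy : g y = (gy : EReal)) :
    gp + ⟪ξ, y - p⟫ ≤ gy := by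
  have h1 := h y
  rw [hp, hy, ← EReal.coe_add] at h1
  exact_mod_cast h1

lemma gne_top_of_isProx {g : H → EReal} {γ : ℝ} {x p : H} (h : IsProx g γ x p)
    {y₀ : H} (hy₀ : g y₀ ≠ ⊤) (hb : ∀ x, g x ≠ ⊥) : g p ≠ ⊤ := by
  intro hp
  have h1 := h y₀
  rw [hp, EReal.top_add_coe] at h1
  have h2 : g y₀ + ((1 / (2 * γ) * ‖x - y₀‖ ^ 2 : ℝ) : EReal) ≠ ⊤ := by
    obtain ⟨r, hr⟩ : ∃ r : ℝ, g y₀ = (r : EReal) := ⟨(g y₀).toReal, (EReal.coe_toReal hy₀ (hb y₀)).symm⟩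
    rw [hr, ← EReal.coe_add]
    exact EReal.coe_ne_top _
  exact h2 (top_le_iff.mp h1)

/-- prox point gives a subgradient. -/
lemma prox_inSubdiff {g : H → EReal} {γ : ℝ} {x p : H} (hγ : 0 < γ)
    (hprop : IsProperEF g) (hconv : IsConvexEF g) (h : IsProx g γ x p) :
    InSubdiff g p (γ⁻¹ • (x - p)) := by
  obtain ⟨⟨y₀, hy₀⟩, hb⟩ := hprop
  have hpt : g p ≠ ⊤ := gne_top_of_isProx h hy₀ hb
  set gp : ℝ := (g p).toReal with hgp
  have hgpe : g p = (gp : EReal) := (EReal.coe_toReal hpt (hb p)).symm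
  intro y
  rcases eq_or_ne (g y) ⊤ with hyt | hyt
  · rw [hyt]; exact le_top
  obtain ⟨gy, hgye⟩ : ∃ r : ℝ, g y = (r : EReal) := ⟨(g y).toReal, (EReal.coe_toReal hyt (hb y)).symm⟩
  rw [hgpe, hgye, ← EReal.coe_add, EReal.coe_le_coe_iff]
  have key : ∀ n : ℕ, gp + γ⁻¹ * ⟪x - p, y - p⟫ ≤ gy + (1/(2*γ)) * ((n:ℝ)+1)⁻¹ * ‖y - p‖^2 := by
    intro n
    set t : ℝ := ((n:ℝ)+1)⁻¹ with ht
    have ht0 : 0 < t := by positivity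
    have ht1 : t ≤ 1 := by
      rw [ht]
      have h1 : (1:ℝ) ≤ (n:ℝ)+1 := by
        have : (0:ℝ) ≤ n := Nat.cast_nonneg n
        linarith
      have := inv_anti₀ one_pos h1
      simpa using this
    have hcx := hconv p y (1-t) t (by linarith) ht0.le (by ring)
    have hsum : (1-t) • p + t • y = p + t • (y - p) := by
      rw [smul_sub]; module
    have hub : g (p + t • (y - p)) ≤ (((1-t)*gp + t*gy : ℝ) : EReal) := by
      rw [← hsum]
      refine hcx.trans_eq ?_
      rw [hgpe, hgye]
      rw [← EReal.coe_mul, ← EReal.coe_mul, ← EReal.coe_add]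
    have hprox := h (p + t • (y - p))
    have hrhs := hprox.trans (add_le_add hub le_rfl)
    rw [hgpe, ← EReal.coe_add, ← EReal.coe_add, EReal.coe_le_coe_iff] at hrhs
    have hnorm : ‖x - (p + t • (y - p))‖^2 = ‖x - p‖^2 - 2*t*⟪x - p, y - p⟫ + t^2 * ‖y - p‖^2 := by
      have : x - (p + t • (y - p)) = (x - p) - t • (y - p) := by abel
      rw [this, norm_sub_sq_real, real_inner_smul_right, norm_smul]
      simp [Real.norm_eq_abs, abs_of_pos ht0, mul_pow]
      ring
    rw [hnorm] at hrhs
    have hc : 0 < 1/(2*γ) := by positivity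
    have hdiv : gp + 2 * (1/(2*γ)) * ⟪x - p, y - p⟫ ≤ gy + (1/(2*γ)) * t * ‖y-p‖^2 := by
      have h2 : t * (gp + 2 * (1/(2*γ)) * ⟪x - p, y - p⟫) ≤ t * (gy + (1/(2*γ)) * t * ‖y-p‖^2) := by
        nlinarith [hrhs]
      exact le_of_mul_le_mul_left (by linarith [h2]) ht0
    have h2c : 2 * (1/(2*γ)) = γ⁻¹ := by field_simp
    rw [h2c] at hdiv
    calc gp + γ⁻¹ * ⟪x - p, y - p⟫ ≤ gy + (1/(2*γ)) * t * ‖y-p‖^2 := hdiv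
      _ = gy + (1/(2*γ)) * ((n:ℝ)+1)⁻¹ * ‖y - p‖^2 := by rw [ht]
  have hlim : Filter.Tendsto (fun n : ℕ => gy + (1/(2*γ)) * ((n:ℝ)+1)⁻¹ * ‖y - p‖^2) atTop (nhds gy) := by
    have h1 : Filter.Tendsto (fun n : ℕ => ((n:ℝ)+1)⁻¹) atTop (nhds 0) :=
      tendsto_one_div_add_atTop_nhds_zero_nat.congr (by intro n; rw [one_div])
    have := ((h1.const_mul (1/(2*γ))).mul_const (‖y - p‖^2)).const_add gy
    simpa using this.congr (by intro n; ring)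
  have := ge_of_tendsto hlim (Filter.Eventually.of_forall key)
  rw [real_inner_smul_left]
  linarith

lemma key_ineq {F : H → H} {L γ : ℝ} (hγ0 : 0 < γ) (hLγ : 0 ≤ γ * L)
    (hmono : ∀ x y : H, 0 ≤ ⟪F x - F y, x - y⟫)
    (hlip : ∀ x y : H, ‖F x - F y‖ ≤ L * ‖x - y‖)
    {g : H → EReal} {s a b c : H}
    (hs : InSubdiff g s (-F s))
    (hu : InSubdiff g b (γ⁻¹ • ((a - γ • F a) - b)))
    (hv : InSubdiff g c (γ⁻¹ • ((a - γ • F b) - c)))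
    {gb gc gs : ℝ} (hgb : g b = (gb : EReal)) (hgc : g c = (gc : EReal))
    (hgs : g s = (gs : EReal)) :
    ‖c - s‖^2 ≤ ‖a - s‖^2 - (1 - γ*L) * (‖a - b‖^2 + ‖b - c‖^2) := by
  have i1 : gb + ⟪γ⁻¹ • ((a - γ • F a) - b), c - b⟫ ≤ gc := insubdiff_real hu hgb hgc
  have i2 : gc + ⟪γ⁻¹ • ((a - γ • F b) - c), s - c⟫ ≤ gs := insubdiff_real hv hgc hgs
  have i3 : gs + ⟪-F s, b - s⟫ ≤ gb := insubdiff_real hs hgs hgb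
  have eu : ⟪γ⁻¹ • ((a - γ • F a) - b), c - b⟫ = γ⁻¹ * (⟪a - b, c - b⟫ - γ * ⟪F a, c - b⟫) := by
    rw [real_inner_smul_left]
    congr 1
    rw [show (a - γ • F a) - b = (a - b) - γ • F a by abel, inner_sub_left, real_inner_smul_left]
  have ev : ⟪γ⁻¹ • ((a - γ • F b) - c), s - c⟫ = γ⁻¹ * (⟪a - c, s - c⟫ - γ * ⟪F b, s - c⟫) := by
    rw [real_inner_smul_left]
    congr 1
    rw [show (a - γ • F b) - c = (a - c) - γ • F b by abel, inner_sub_left, real_inner_smul_left]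
  have hcyc : γ⁻¹ * (⟪a - b, c - b⟫ - γ * ⟪F a, c - b⟫)
      + γ⁻¹ * (⟪a - c, s - c⟫ - γ * ⟪F b, s - c⟫) + ⟪-F s, b - s⟫ ≤ 0 := by
    rw [← eu, ← ev]; linarith
  have hγcyc : ⟪a - b, c - b⟫ - γ * ⟪F a, c - b⟫ + ⟪a - c, s - c⟫ - γ * ⟪F b, s - c⟫
      - γ * ⟪F s, b - s⟫ ≤ 0 := by
    have hne : γ ≠ 0 := hγ0.ne'
    have h2 := mul_le_mul_of_nonneg_left hcyc hγ0.le
    rw [mul_zero, mul_add, mul_add, mul_inv_cancel_left₀ hne, mul_inv_cancel_left₀ hne,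
      inner_neg_left] at h2
    linarith
  have hm3 : γ * ⟪F s, b - s⟫ ≤ γ * ⟪F b, b - s⟫ := by
    have h0 := hmono b s
    rw [inner_sub_left] at h0
    have : ⟪F s, b - s⟫ ≤ ⟪F b, b - s⟫ := by linarith
    exact mul_le_mul_of_nonneg_left this hγ0.le
  have e1 : ⟪a - b, c - b⟫ = -⟪a - b, b - c⟫ := by
    rw [show c - b = -(b - c) by abel, inner_neg_right]
  have e2 : ⟪a - c, s - c⟫ = -⟪a - b, c - s⟫ - ⟪b - c, c - s⟫ := by
    rw [show a - c = (a - b) + (b - c) by abel, show s - c = -(c - s) by abel,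
      inner_neg_right, inner_add_left]
    ring
  have e3 : ⟪F b, s - c⟫ + ⟪F b, b - s⟫ = ⟪F b, b - c⟫ := by
    rw [← inner_add_right, show (s - c) + (b - s) = b - c by abel]
  have e4 : ⟪F a, c - b⟫ = -⟪F a, b - c⟫ := by
    rw [show c - b = -(b - c) by abel, inner_neg_right]
  have e5 : ⟪F a - F b, b - c⟫ = ⟪F a, b - c⟫ - ⟪F b, b - c⟫ := inner_sub_left _ _ _
  have e3g : γ * (⟪F b, s - c⟫ + ⟪F b, b - s⟫) = γ * ⟪F b, b - c⟫ := by rw [e3]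
  have e4g : γ * ⟪F a, c - b⟫ = -(γ * ⟪F a, b - c⟫) := by rw [e4]; ring
  have hxy : γ * ⟪F a - F b, b - c⟫ ≤ ⟪a-b, b-c⟫ + ⟪a-b, c-s⟫ + ⟪b-c, c-s⟫ := by
    rw [e5]
    linarith [hγcyc, hm3, e1, e2, e3g, e4g]
  have hA : ‖a-s‖^2 = ‖c-s‖^2 + ‖a-b‖^2 + ‖b-c‖^2
      + 2*(⟪a-b, b-c⟫ + ⟪a-b, c-s⟫ + ⟪b-c, c-s⟫) := by
    rw [show a - s = ((a-b)+(b-c))+(c-s) by abel, norm_add_sq_real, norm_add_sq_real,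
      inner_add_left]
    ring
  have hcs : |⟪F a - F b, b - c⟫| ≤ L * (‖a-b‖ * ‖b-c‖) := by
    calc |⟪F a - F b, b - c⟫| ≤ ‖F a - F b‖ * ‖b - c‖ := abs_real_inner_le_norm _ _
      _ ≤ (L * ‖a - b‖) * ‖b - c‖ := by
          apply mul_le_mul_of_nonneg_right (hlip a b) (norm_nonneg _)
      _ = L * (‖a-b‖ * ‖b-c‖) := by ring
  have hz : -(γ * (L * (‖a-b‖ * ‖b-c‖))) ≤ γ * ⟪F a - F b, b - c⟫ := by
    have h1 : -(L * (‖a-b‖ * ‖b-c‖)) ≤ ⟪F a - F b, b - c⟫ := by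
      have := neg_abs_le (⟪F a - F b, b - c⟫ : ℝ); linarith [hcs]
    have h2 := mul_le_mul_of_nonneg_left h1 hγ0.le
    linarith
  have hprod : 0 ≤ (γ*L) * (‖a-b‖ - ‖b-c‖)^2 := mul_nonneg hLγ (sq_nonneg _)
  linarith [hA, hxy, hz, hprod]

lemma wlsc [CompleteSpace H] {g : H → EReal} (hconv : IsConvexEF g)
    (hlsc : LowerSemicontinuous g) (hbot : ∀ x, g x ≠ ⊥)
    (V : Ultrafilter ℕ) (x : ℕ → H) (ζ : H)
    (hx : ∀ w : H, Tendsto (fun k => ⟪x k, w⟫) (V : Filter ℕ) (nhds ⟪ζ, w⟫))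
    (B : ℕ → ℝ) (t : ℝ) (hB : ∀ k, g (x k) ≤ (B k : EReal))
    (hBt : Tendsto B (V : Filter ℕ) (nhds t)) :
    g ζ ≤ (t : EReal) := by
  by_contra hcon
  push_neg at hcon
  obtain ⟨s, hts, hsζ⟩ : ∃ s : ℝ, t < s ∧ ((s:ℝ) : EReal) < g ζ := by
    rcases eq_or_ne (g ζ) ⊤ with hT | hT
    · exact ⟨t + 1, by linarith, by rw [hT]; exact EReal.coe_lt_top _⟩
    · obtain ⟨r, hr⟩ : ∃ r : ℝ, g ζ = (r : EReal) :=
        ⟨(g ζ).toReal, (EReal.coe_toReal hT (hbot ζ)).symm⟩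
      rw [hr] at hcon ⊢
      have htr : t < r := by exact_mod_cast hcon
      exact ⟨(t + r)/2, by linarith, by exact_mod_cast (by linarith : (t+r)/2 < r)⟩
  set C : Set H := {w | g w ≤ ((s:ℝ) : EReal)} with hC
  have hCc : Convex ℝ C := by
    intro w1 h1 w2 h2 a b ha hb' hab
    obtain ⟨r1, hr1⟩ : ∃ r : ℝ, g w1 = (r : EReal) := by
      refine ⟨(g w1).toReal, (EReal.coe_toReal ?_ (hbot w1)).symm⟩
      exact fun hT => by simp [hC, hT] at h1
    obtain ⟨r2, hr2⟩ : ∃ r : ℝ, g w2 = (r : EReal) := by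
      refine ⟨(g w2).toReal, (EReal.coe_toReal ?_ (hbot w2)).symm⟩
      exact fun hT => by simp [hC, hT] at h2
    have hr1s : r1 ≤ s := by have := h1; rw [hC] at this; simp [hr1] at this; exact_mod_cast this
    have hr2s : r2 ≤ s := by have := h2; rw [hC] at this; simp [hr2] at this; exact_mod_cast this
    have := hconv w1 w2 a b ha hb' hab
    rw [hr1, hr2, ← EReal.coe_mul, ← EReal.coe_mul, ← EReal.coe_add] at this
    refine Set.mem_setOf_eq ▸ this.trans ?_
    have : a * r1 + b * r2 ≤ s := by
      have e : a * s + b * s = s := by rw [← add_mul, hab, one_mul]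
      nlinarith [mul_le_mul_of_nonneg_left hr1s ha, mul_le_mul_of_nonneg_left hr2s hb']
    exact_mod_cast this
  have hCcl : IsClosed C := by
    have hopen := (lowerSemicontinuous_iff_isOpen_preimage.mp hlsc) ((s:ℝ) : EReal)
    have : C = (g ⁻¹' Set.Ioi ((s:ℝ) : EReal))ᶜ := by
      ext w; simp [hC, Set.mem_preimage, Set.mem_Ioi, not_lt]
    rw [this]
    exact hopen.isClosed_compl
  have hnot : ζ ∉ C := by
    rw [hC]; simp only [Set.mem_setOf_eq, not_le]; exact hsζ
  obtain ⟨f, u, hfu, huζ⟩ := geometric_hahn_banach_closed_point hCc hCcl hnot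
  have hev : ∀ᶠ k in (V : Filter ℕ), f (x k) < u := by
    filter_upwards [hBt.eventually_lt_const hts] with k hk
    have hxk : x k ∈ C := by
      rw [hC]
      refine Set.mem_setOf_eq ▸ (hB k).trans ?_
      exact_mod_cast hk.le
    exact hfu _ hxk
  have htend : Tendsto (fun k => f (x k)) (V : Filter ℕ) (nhds (f ζ)) := by
    have h1 := hx ((InnerProductSpace.toDual ℝ H).symm f)
    have he : ∀ w : H, f w = ⟪w, (InnerProductSpace.toDual ℝ H).symm f⟫ := by
      intro w
      rw [real_inner_comm, InnerProductSpace.toDual_symm_apply]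
    simpa [← he] using h1
  exact absurd (le_of_tendsto htend (hev.mono fun k hk => hk.le)) (not_le.mpr huζ)

lemma exists_weak_cluster [CompleteSpace H] (z : ℕ → H) (M : ℝ) (hM : ∀ k, ‖z k‖ ≤ M)
    (V : Ultrafilter ℕ) :
    ∃ ζ : H, ∀ w : H, Tendsto (fun k => ⟪z k, w⟫) (V : Filter ℕ) (nhds ⟪ζ, w⟫) := by
  have hM0 : 0 ≤ M := (norm_nonneg _).trans (hM 0)
  have hlim : ∀ w : H, ∃ l : ℝ, Tendsto (fun k => ⟪z k, w⟫) (V : Filter ℕ) (nhds l) := by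
    intro w
    have hbd : ∀ k, (⟪z k, w⟫ : ℝ) ∈ Set.Icc (-(M * ‖w‖)) (M * ‖w‖) := by
      intro k
      have h1 : |(⟪z k, w⟫ : ℝ)| ≤ M * ‖w‖ := by
        calc |(⟪z k, w⟫ : ℝ)| ≤ ‖z k‖ * ‖w‖ := abs_real_inner_le_norm _ _
          _ ≤ M * ‖w‖ := mul_le_mul_of_nonneg_right (hM k) (norm_nonneg w)
      exact abs_le.mp h1
    obtain ⟨l, -, hl⟩ := isCompact_Icc.ultrafilter_le_nhds
      (V.map (fun k => ⟪z k, w⟫)) (by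
        rw [Ultrafilter.coe_map, Filter.le_principal_iff, Filter.mem_map]
        exact Filter.univ_mem' hbd)
    exact ⟨l, hl⟩
  choose φ hφ using hlim
  have hadd : ∀ w1 w2, φ (w1 + w2) = φ w1 + φ w2 := by
    intro w1 w2
    refine tendsto_nhds_unique (hφ (w1 + w2)) ?_
    exact (((hφ w1).add (hφ w2)).congr fun k => (inner_add_right _ _ _).symm)
  have hsmul : ∀ (c : ℝ) (w : H), φ (c • w) = c * φ w := by
    intro c w
    refine tendsto_nhds_unique (hφ (c • w)) ?_
    exact (((hφ w).const_mul c).congr fun k => (real_inner_smul_right _ _ _).symm)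
  let f₀ : H →ₗ[ℝ] ℝ :=
    { toFun := φ
      map_add' := hadd
      map_smul' := hsmul }
  have hbdd : ∀ w, ‖f₀ w‖ ≤ M * ‖w‖ := by
    intro w
    rw [Real.norm_eq_abs]
    refine le_of_tendsto (hφ w).abs (Filter.Eventually.of_forall fun k => ?_)
    calc |(⟪z k, w⟫ : ℝ)| ≤ ‖z k‖ * ‖w‖ := abs_real_inner_le_norm _ _
      _ ≤ M * ‖w‖ := mul_le_mul_of_nonneg_right (hM k) (norm_nonneg w)
  let fc : H →L[ℝ] ℝ := f₀.mkContinuous M hbdd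
  refine ⟨(InnerProductSpace.toDual ℝ H).symm fc, fun w => ?_⟩
  have : (⟪(InnerProductSpace.toDual ℝ H).symm fc, w⟫ : ℝ) = φ w :=
    InnerProductSpace.toDual_symm_apply
  rw [this]
  exact hφ w

end Aux
theorem stmt13 {H : Type*} [NormedAddCommGroup H] [InnerProductSpace ℝ H] [CompleteSpace H]
    (F : H → H) (L γ : ℝ) (hL : 0 < L)
    (hmono : ∀ x y : H, 0 ≤ ⟪F x - F y, x - y⟫)
    (hlip : ∀ x y : H, ‖F x - F y‖ ≤ L * ‖x - y‖)
    (g : H → EReal) (hproper : IsProperEF g) (hconv : IsConvexEF g)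
    (hlsc : LowerSemicontinuous g)
    (hγ0 : 0 < γ) (hγ1 : γ < 1 / L)
    (hzer : ∃ zstar : H, InSubdiff g zstar (-F zstar))
    (z zb : ℕ → H)
    (hzb : ∀ k, IsProx g γ (z k - γ • F (z k)) (zb k))
    (hz : ∀ k, IsProx g γ (z k - γ • F (zb k)) (z (k + 1))) :
    ∃ zinf : H, InSubdiff g zinf (-F zinf) ∧
      ∀ y : H, Filter.Tendsto (fun k => ⟪z k, y⟫) Filter.atTop (nhds ⟪zinf, y⟫) := by
  obtain ⟨zs, hzs⟩ := hzer
  obtain ⟨⟨y₀, hy₀⟩, hbot⟩ := hproper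
  have hproper' : IsProperEF g := ⟨⟨y₀, hy₀⟩, hbot⟩
  have hγL : γ * L < 1 := by
    rw [← lt_div_iff₀ hL] at *; exact hγ1
  have hγLpos : 0 ≤ γ * L := mul_nonneg hγ0.le hL.le
  set δ : ℝ := 1 - γ * L with hδdef
  have hδ : 0 < δ := by simp [hδdef]; linarith
  -- subgradients from prox steps
  have hub : ∀ k, InSubdiff g (zb k) (γ⁻¹ • ((z k - γ • F (z k)) - zb k)) :=
    fun k => prox_inSubdiff hγ0 hproper' hconv (hzb k)
  have hvb : ∀ k, InSubdiff g (z (k+1)) (γ⁻¹ • ((z k - γ • F (zb k)) - z (k+1))) :=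
    fun k => prox_inSubdiff hγ0 hproper' hconv (hz k)
  -- finiteness
  have hfin : ∀ {p : H}, g p ≠ ⊤ → ∃ r : ℝ, g p = (r : EReal) :=
    fun {p} hp => ⟨(g p).toReal, (EReal.coe_toReal hp (hbot p)).symm⟩
  have hgzbTop : ∀ k, g (zb k) ≠ ⊤ := fun k => gne_top_of_isProx (hzb k) hy₀ hbot
  have hgzTop : ∀ k, g (z (k+1)) ≠ ⊤ := fun k => gne_top_of_isProx (hz k) hy₀ hbot
  -- key inequality for any solution
  have hKEY : ∀ (p : H), InSubdiff g p (-F p) → ∀ k,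
      ‖z (k+1) - p‖^2 ≤ ‖z k - p‖^2 - δ * (‖z k - zb k‖^2 + ‖zb k - z (k+1)‖^2) := by
    intro p hp k
    obtain ⟨gb, hgb⟩ := hfin (hgzbTop k)
    obtain ⟨gc, hgc⟩ := hfin (hgzTop k)
    obtain ⟨gp, hgp⟩ := hfin (gne_top_of_inSubdiff hp hy₀)
    exact key_ineq hγ0 hγLpos hmono hlip hp (hub k) (hvb k) hgb hgc hgp
  have hsq : ∀ k (p : H), (0:ℝ) ≤ ‖z k - zb k‖^2 + ‖zb k - z (k+1)‖^2 := by
    intro k p; positivity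
  have hmonot : ∀ (p : H), InSubdiff g p (-F p) → ∀ k, ‖z (k+1) - p‖^2 ≤ ‖z k - p‖^2 := by
    intro p hp k
    have h1 := hKEY p hp k
    nlinarith [hsq k p, hδ]
  have hlimex : ∀ (p : H), InSubdiff g p (-F p) →
      ∃ ℓ : ℝ, Tendsto (fun k => ‖z k - p‖^2) atTop (nhds ℓ) := by
    intro p hp
    have hanti : Antitone (fun k => ‖z k - p‖^2) := antitone_nat_of_succ_le (hmonot p hp)
    refine ⟨_, tendsto_atTop_ciInf hanti ⟨0, ?_⟩⟩
    rintro r ⟨k, rfl⟩; positivity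
  -- Fejér consequences for the fixed solution zs
  set r : ℕ → ℝ := fun k => ‖z k - zs‖^2 with hrdef
  have hanti : Antitone r := antitone_nat_of_succ_le (hmonot zs hzs)
  obtain ⟨ℓ, hℓ⟩ := hlimex zs hzs
  have hℓ' : Tendsto (fun k => r (k+1)) atTop (nhds ℓ) := hℓ.comp (tendsto_add_atTop_nat 1)
  have hdiff0 : Tendsto (fun k => r k - r (k+1)) atTop (nhds 0) := by
    have := hℓ.sub hℓ'
    simpa using this
  have hs0 : Tendsto (fun k => ‖z k - zb k‖^2 + ‖zb k - z (k+1)‖^2) atTop (nhds 0) := by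
    have hup : ∀ k, ‖z k - zb k‖^2 + ‖zb k - z (k+1)‖^2 ≤ (r k - r (k+1)) / δ := by
      intro k
      have h1 := hKEY zs hzs k
      have hrw : r k = ‖z k - zs‖^2 := rfl
      have hrw2 : r (k+1) = ‖z (k+1) - zs‖^2 := rfl
      rw [le_div_iff₀ hδ, hrw, hrw2]
      nlinarith [h1]
    have hdn : ∀ k, (0:ℝ) ≤ ‖z k - zb k‖^2 + ‖zb k - z (k+1)‖^2 := fun k => hsq k zs
    have hconv0 : Tendsto (fun k => (r k - r (k+1)) / δ) atTop (nhds 0) := by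
      have := hdiff0.div_const δ
      simpa using this
    exact squeeze_zero hdn hup hconv0
  have hzzb2 : Tendsto (fun k => ‖z k - zb k‖^2) atTop (nhds 0) := by
    refine squeeze_zero (fun k => by positivity) (fun k => ?_) hs0
    nlinarith [sq_nonneg ‖zb k - z (k+1)‖]
  have hzzb : Tendsto (fun k => ‖z k - zb k‖) atTop (nhds 0) := by
    have h2 := (Real.continuous_sqrt.tendsto 0).comp hzzb2
    have h3 : (fun k => Real.sqrt (‖z k - zb k‖^2)) = fun k => ‖z k - zb k‖ :=
      funext fun k => Real.sqrt_sq (norm_nonneg _)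
    rw [Function.comp_def, h3] at h2
    simpa using h2
  -- uniform bounds
  have hzdist : ∀ k, ‖z k - zs‖ ≤ ‖z 0 - zs‖ := by
    intro k
    have hrk : r k ≤ r 0 := hanti (Nat.zero_le k)
    have hrw : r k = ‖z k - zs‖^2 := rfl
    have hrw0 : r 0 = ‖z 0 - zs‖^2 := rfl
    rw [hrw, hrw0] at hrk
    nlinarith [norm_nonneg (z k - zs), norm_nonneg (z 0 - zs), hrk]
  set Mz : ℝ := ‖z 0 - zs‖ + ‖zs‖ with hMz
  have hRz : ∀ k, ‖z k‖ ≤ Mz := by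
    intro k
    calc ‖z k‖ = ‖(z k - zs) + zs‖ := by rw [sub_add_cancel]
      _ ≤ ‖z k - zs‖ + ‖zs‖ := norm_add_le _ _
      _ ≤ Mz := by rw [hMz]; linarith [hzdist k]
  have hzb_z_bd : ∀ k, ‖z k - zb k‖ ≤ Real.sqrt (r 0 / δ) := by
    intro k
    have h1 := hKEY zs hzs k
    have h2 : ‖z k - zb k‖^2 ≤ r 0 / δ := by
      rw [le_div_iff₀ hδ]
      have hrk : r k ≤ r 0 := hanti (Nat.zero_le k)
      have hrw : r k = ‖z k - zs‖^2 := rfl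
      have hrw0 : r 0 = ‖z 0 - zs‖^2 := rfl
      rw [hrw, hrw0] at hrk
      have hr1 : (0:ℝ) ≤ ‖z (k+1) - zs‖^2 := by positivity
      rw [hrw0]
      nlinarith [sq_nonneg ‖zb k - z (k+1)‖, h1]
    calc ‖z k - zb k‖ = Real.sqrt (‖z k - zb k‖^2) := (Real.sqrt_sq (norm_nonneg _)).symm
      _ ≤ Real.sqrt (r 0 / δ) := Real.sqrt_le_sqrt h2
  set Mzb : ℝ := Mz + Real.sqrt (r 0 / δ) with hMzb
  have hRzb : ∀ k, ‖zb k‖ ≤ Mzb := by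
    intro k
    calc ‖zb k‖ = ‖z k - (z k - zb k)‖ := by congr 1; abel
      _ ≤ ‖z k‖ + ‖z k - zb k‖ := norm_sub_le _ _
      _ ≤ Mz + Real.sqrt (r 0 / δ) := add_le_add (hRz k) (hzb_z_bd k)
  -- main per-ultrafilter construction
  have hMain : ∀ V : Ultrafilter ℕ, (V : Filter ℕ) ≤ atTop →
      ∃ ζ : H, (∀ w : H, Tendsto (fun k => ⟪z k, w⟫) (V : Filter ℕ) (nhds ⟪ζ, w⟫)) ∧
        InSubdiff g ζ (-F ζ) := by
    intro V hV
    obtain ⟨ζ, hζ⟩ := exists_weak_cluster z Mz hRz V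
    refine ⟨ζ, hζ, ?_⟩
    -- zb also converges weakly to ζ along V
    have hζb : ∀ w : H, Tendsto (fun k => ⟪zb k, w⟫) (V : Filter ℕ) (nhds ⟪ζ, w⟫) := by
      intro w
      have hd : Tendsto (fun k => (⟪zb k - z k, w⟫ : ℝ)) atTop (nhds 0) := by
        refine squeeze_zero_norm (fun k => ?_) (by simpa using hzzb.mul_const ‖w‖)
        calc ‖(⟪zb k - z k, w⟫ : ℝ)‖ ≤ ‖zb k - z k‖ * ‖w‖ := by
              rw [Real.norm_eq_abs]; exact abs_real_inner_le_norm _ _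
          _ = ‖z k - zb k‖ * ‖w‖ := by rw [norm_sub_rev]
      have h2 := (hζ w).add (hd.mono_left hV)
      have h3 : (fun k => (⟪z k, w⟫ : ℝ) + ⟪zb k - z k, w⟫) = fun k => (⟪zb k, w⟫ : ℝ) := by
        funext k
        rw [← inner_add_left]
        congr 1
        abel
      rw [h3] at h2
      simpa using h2
    -- the error vector e k := v k + F (zb k) tends to 0 strongly
    set e : ℕ → H := fun k => γ⁻¹ • ((z k - γ • F (z k)) - zb k) + F (zb k) with hedef
    have he : ∀ k, e k = γ⁻¹ • (z k - zb k) - (F (z k) - F (zb k)) := by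
      intro k
      simp only [hedef]
      rw [smul_sub, smul_sub, smul_smul, inv_mul_cancel₀ hγ0.ne', one_smul]
      module
    have he0 : Tendsto (fun k => ‖e k‖) atTop (nhds 0) := by
      have hub' : ∀ k, ‖e k‖ ≤ (γ⁻¹ + L) * ‖z k - zb k‖ := by
        intro k
        rw [he k]
        calc ‖γ⁻¹ • (z k - zb k) - (F (z k) - F (zb k))‖
            ≤ ‖γ⁻¹ • (z k - zb k)‖ + ‖F (z k) - F (zb k)‖ := norm_sub_le _ _
          _ ≤ |γ⁻¹| * ‖z k - zb k‖ + L * ‖z k - zb k‖ := by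
              rw [norm_smul, Real.norm_eq_abs]
              exact add_le_add le_rfl (hlip _ _)
          _ = (γ⁻¹ + L) * ‖z k - zb k‖ := by
              rw [abs_of_pos (by positivity : (0:ℝ) < γ⁻¹)]; ring
      refine squeeze_zero (fun k => norm_nonneg _) hub' ?_
      have := hzzb.const_mul (γ⁻¹ + L)
      simpa using this
    -- Minty inequality
    have hM1 : ∀ y : H, g y ≠ ⊤ → g ζ + ((⟪F y, ζ - y⟫ : ℝ) : EReal) ≤ g y := by
      intro y hy
      obtain ⟨gy, hgy⟩ := hfin hy
      have hBineq : ∀ k, g (zb k) ≤ ((gy - ⟪e k, y - zb k⟫ - ⟪F y, zb k - y⟫ : ℝ) : EReal) := by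
        intro k
        obtain ⟨gb, hgb⟩ := hfin (hgzbTop k)
        have h1 : gb + ⟪γ⁻¹ • ((z k - γ • F (z k)) - zb k), y - zb k⟫ ≤ gy :=
          insubdiff_real (hub k) hgb hgy
        have h2 : ⟪γ⁻¹ • ((z k - γ • F (z k)) - zb k), y - zb k⟫
            = ⟪e k, y - zb k⟫ - ⟪F (zb k), y - zb k⟫ := by
          rw [← inner_sub_left]
          congr 1
          simp only [hedef]
          abel
        have h3 : ⟪F y, zb k - y⟫ ≤ ⟪F (zb k), zb k - y⟫ := by
          have h0 := hmono (zb k) y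
          rw [inner_sub_left] at h0
          linarith
        have h4 : ⟪F (zb k), y - zb k⟫ = -⟪F (zb k), zb k - y⟫ := by
          rw [show y - zb k = -(zb k - y) by abel, inner_neg_right]
        have h5 : gb ≤ gy - ⟪e k, y - zb k⟫ - ⟪F y, zb k - y⟫ := by
          rw [h2, h4] at h1
          linarith
        rw [hgb]
        exact_mod_cast h5
      have hB1 : Tendsto (fun k => (⟪e k, y - zb k⟫ : ℝ)) atTop (nhds 0) := by
        refine squeeze_zero_norm (fun k => ?_) (by simpa using he0.mul_const (‖y‖ + Mzb))
        calc ‖(⟪e k, y - zb k⟫ : ℝ)‖ ≤ ‖e k‖ * ‖y - zb k‖ := by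
              rw [Real.norm_eq_abs]; exact abs_real_inner_le_norm _ _
          _ ≤ ‖e k‖ * (‖y‖ + Mzb) := by
              refine mul_le_mul_of_nonneg_left ?_ (norm_nonneg _)
              calc ‖y - zb k‖ ≤ ‖y‖ + ‖zb k‖ := norm_sub_le _ _
                _ ≤ ‖y‖ + Mzb := by linarith [hRzb k]
      have hfun : ∀ u : H, (⟪u, F y⟫ : ℝ) - ⟪F y, y⟫ = ⟪F y, u - y⟫ := by
        intro u
        rw [inner_sub_right, real_inner_comm]
      have hB2 : Tendsto (fun k => (⟪F y, zb k - y⟫ : ℝ)) (V : Filter ℕ) (nhds ⟪F y, ζ - y⟫) := by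
        have h := (hζb (F y)).sub_const (⟪F y, y⟫ : ℝ)
        have h2 := h.congr (fun k => hfun (zb k))
        rw [hfun ζ] at h2
        exact h2
      have hBt : Tendsto (fun k => gy - ⟪e k, y - zb k⟫ - ⟪F y, zb k - y⟫) (V : Filter ℕ)
          (nhds (gy - 0 - ⟪F y, ζ - y⟫)) :=
        (((tendsto_const_nhds).sub (hB1.mono_left hV)).sub hB2)
      have hle := wlsc hconv hlsc hbot V zb ζ hζb _ _ hBineq hBt
      have hζtop : g ζ ≠ ⊤ := by
        intro hT
        rw [hT] at hle
        exact (EReal.coe_ne_top _) (top_le_iff.mp hle)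
      obtain ⟨gz, hgz⟩ := hfin hζtop
      rw [hgz] at hle ⊢
      rw [hgy, ← EReal.coe_add, EReal.coe_le_coe_iff]
      have : gz ≤ gy - 0 - ⟪F y, ζ - y⟫ := by exact_mod_cast hle
      linarith
    -- from Minty to a genuine subgradient
    have hζtop : g ζ ≠ ⊤ := by
      intro hT
      have := hM1 y₀ hy₀
      rw [hT, EReal.top_add_coe] at this
      exact hy₀ (top_le_iff.mp this)
    obtain ⟨gz, hgz⟩ := hfin hζtop
    intro w
    rcases eq_or_ne (g w) ⊤ with hw | hw
    · rw [hw]; exact le_top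
    obtain ⟨gw, hgw⟩ := hfin hw
    rw [hgz, hgw, ← EReal.coe_add, EReal.coe_le_coe_iff]
    have key : ∀ n : ℕ, gz ≤ gw + ⟪F (ζ + ((n:ℝ)+1)⁻¹ • (w - ζ)), w - ζ⟫ := by
      intro n
      set t : ℝ := ((n:ℝ)+1)⁻¹ with ht
      have ht0 : 0 < t := by positivity
      have ht1 : t ≤ 1 := by
        rw [ht]
        have h1 : (1:ℝ) ≤ (n:ℝ)+1 := by
          have : (0:ℝ) ≤ n := Nat.cast_nonneg n
          linarith
        have := inv_anti₀ one_pos h1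
        simpa using this
      set yt : H := ζ + t • (w - ζ) with hyt
      have hsum : (1-t) • ζ + t • w = yt := by
        rw [hyt, smul_sub]; module
      have hcx := hconv ζ w (1-t) t (by linarith) ht0.le (by ring)
      rw [hsum, hgz, hgw, ← EReal.coe_mul, ← EReal.coe_mul, ← EReal.coe_add] at hcx
      have hyttop : g yt ≠ ⊤ := by
        intro hT
        rw [hT] at hcx
        exact (EReal.coe_ne_top _) (top_le_iff.mp hcx)
      obtain ⟨gyt, hgyt⟩ := hfin hyttop
      have hm := hM1 yt hyttop
      rw [hgz, hgyt, ← EReal.coe_add, EReal.coe_le_coe_iff] at hm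
      rw [hgyt, EReal.coe_le_coe_iff] at hcx
      have hinner : (⟪F yt, ζ - yt⟫ : ℝ) = -(t * ⟪F yt, w - ζ⟫) := by
        rw [show ζ - yt = -(t • (w - ζ)) by rw [hyt]; abel, inner_neg_right,
          real_inner_smul_right]
      rw [hinner] at hm
      -- hm : gz - t * ⟪F yt, w - ζ⟫ ≤ gyt ;  hcx : gyt ≤ (1-t)*gz + t*gw
      have h6 : t * gz - t * ⟪F yt, w - ζ⟫ ≤ t * gw := by nlinarith [hm, hcx]
      have h7 : t * (gz - ⟪F yt, w - ζ⟫) ≤ t * gw := by nlinarith [h6]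
      have := le_of_mul_le_mul_left h7 ht0
      linarith
    have hFt : Tendsto (fun n : ℕ => (⟪F (ζ + ((n:ℝ)+1)⁻¹ • (w - ζ)), w - ζ⟫ : ℝ)) atTop
        (nhds ⟪F ζ, w - ζ⟫) := by
      have hd : Tendsto (fun n : ℕ => (⟪F (ζ + ((n:ℝ)+1)⁻¹ • (w - ζ)) - F ζ, w - ζ⟫ : ℝ))
          atTop (nhds 0) := by
        have hgbnd : Tendsto (fun n : ℕ => ((n:ℝ)+1)⁻¹ * (L * ‖w - ζ‖^2)) atTop (nhds 0) := by
          have h1 : Tendsto (fun n : ℕ => ((n:ℝ)+1)⁻¹) atTop (nhds 0) :=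
            tendsto_one_div_add_atTop_nhds_zero_nat.congr (by intro n; rw [one_div])
          simpa using h1.mul_const (L * ‖w - ζ‖^2)
        refine squeeze_zero_norm (fun n => ?_) hgbnd
        calc ‖(⟪F (ζ + ((n:ℝ)+1)⁻¹ • (w - ζ)) - F ζ, w - ζ⟫ : ℝ)‖
              ≤ ‖F (ζ + ((n:ℝ)+1)⁻¹ • (w - ζ)) - F ζ‖ * ‖w - ζ‖ := by
                rw [Real.norm_eq_abs]; exact abs_real_inner_le_norm _ _
            _ ≤ (L * ‖((n:ℝ)+1)⁻¹ • (w - ζ)‖) * ‖w - ζ‖ := by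
                refine mul_le_mul_of_nonneg_right ?_ (norm_nonneg _)
                have := hlip (ζ + ((n:ℝ)+1)⁻¹ • (w - ζ)) ζ
                simpa using this
            _ = ((n:ℝ)+1)⁻¹ * (L * ‖w - ζ‖^2) := by
                rw [norm_smul, Real.norm_eq_abs, abs_of_pos (by positivity : (0:ℝ) < ((n:ℝ)+1)⁻¹)]
                ring
      have h2 := hd.add_const (⟪F ζ, w - ζ⟫ : ℝ)
      rw [zero_add] at h2
      refine h2.congr fun n => ?_
      rw [← inner_add_left]
      congr 1
      abel
    have h8 := ge_of_tendsto (hFt.const_add gw) (Filter.Eventually.of_forall key)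
    have hinner2 : (⟪-F ζ, w - ζ⟫ : ℝ) = -⟪F ζ, w - ζ⟫ := by rw [inner_neg_left]
    rw [hinner2]
    linarith
  -- assemble
  obtain ⟨ζ, hζw, hζsol⟩ := hMain (Ultrafilter.of atTop) (Ultrafilter.of_le _)
  refine ⟨ζ, hζsol, ?_⟩
  intro y
  rw [tendsto_iff_ultrafilter]
  intro V hV
  obtain ⟨ξ, hξw, hξsol⟩ := hMain V hV
  suffices he : ξ = ζ by rw [← he]; exact hξw y
  obtain ⟨ℓ1, hℓ1⟩ := hlimex ζ hζsol
  obtain ⟨ℓ2, hℓ2⟩ := hlimex ξ hξsol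
  set c : ℝ := (ℓ2 - ℓ1 + ‖ζ‖^2 - ‖ξ‖^2) / 2 with hcdef
  have hptw : ∀ k, (⟪z k, ζ - ξ⟫ : ℝ)
      = (‖z k - ξ‖^2 - ‖z k - ζ‖^2 + ‖ζ‖^2 - ‖ξ‖^2) / 2 := by
    intro k
    have e1 := norm_sub_sq_real (z k) ζ
    have e2 := norm_sub_sq_real (z k) ξ
    have e3 : (⟪z k, ζ - ξ⟫ : ℝ) = ⟪z k, ζ⟫ - ⟪z k, ξ⟫ := inner_sub_right _ _ _
    linarith
  have hc : Tendsto (fun k => (⟪z k, ζ - ξ⟫ : ℝ)) atTop (nhds c) := by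
    have h1 := (((hℓ2.sub hℓ1).add_const (‖ζ‖^2)).sub_const (‖ξ‖^2)).div_const 2
    have h2 : (fun k => (‖z k - ξ‖^2 - ‖z k - ζ‖^2 + ‖ζ‖^2 - ‖ξ‖^2) / 2)
        = fun k => (⟪z k, ζ - ξ⟫ : ℝ) := funext fun k => (hptw k).symm
    rw [hcdef]
    have h3 : (ℓ2 - ℓ1 + ‖ζ‖^2 - ‖ξ‖^2) / 2 = (ℓ2 - ℓ1 + ‖ζ‖^2 - ‖ξ‖^2) / 2 := rfl
    refine Tendsto.congr (fun k => (hptw k).symm) ?_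
    exact h1
  have hU : (⟪ζ, ζ - ξ⟫ : ℝ) = c :=
    tendsto_nhds_unique (hζw (ζ - ξ)) (hc.mono_left (Ultrafilter.of_le _))
  have hVl : (⟪ξ, ζ - ξ⟫ : ℝ) = c :=
    tendsto_nhds_unique (hξw (ζ - ξ)) (hc.mono_left hV)
  have hzero : (⟪ζ - ξ, ζ - ξ⟫ : ℝ) = 0 := by
    rw [inner_sub_left, hU, hVl]; ring
  have : ‖ζ - ξ‖^2 = 0 := by
    rw [← real_inner_self_eq_norm_sq, hzero]
  have h9 : ζ - ξ = 0 := by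
    have := pow_eq_zero_iff (n := 2) (by norm_num) |>.mp this
    exact norm_eq_zero.mp this
  have : ζ = ξ := by
    have := sub_eq_zero.mp h9
    exact this
  exact this.symm
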